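/- arXiv:1902.05302 — 2 statements merged into one kernel-verified Lean document; each statement's English description precedes it below -/
import Mathlib

section
/- For all integers r, D ≥ 1, the polynomial ∏_{1≤i<j≤D}(x_j−x_i)^r divides F_{r,D}(x_1,…,x_D) in ℚ[x_1,…,x_D], and the quotient G_{r,D} := F_{r,D} / ∏_{1≤i<j≤D}(x_j−x_i)^r is a symmetric polynomial of total degree at most r^2·D(D+1)/2 − r·D(D−1)/2. -/
open Nat Finset

/-- `F_{r,D}(x_1,…,x_D)`: the determinant of the rD×rD matrix whose rows are indexed
(in lexicographic order) by pairs `(i,j)`, corresponding to `n = i·D + j + 1 ∈ {1,…,rD}`,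
and whose columns are indexed by pairs `(m,v)` with `0 ≤ m ≤ r−1`, `1 ≤ v ≤ D`
(ordered lexicographically), with `(n,(m,v))` entry `B_{n+m}(x_v)/(n+m)`. -/
noncomputable def Fpoly (r D : ℕ) : MvPolynomial (Fin D) ℚ :=
  Matrix.det (Matrix.of fun (p q : Fin r × Fin D) =>
    MvPolynomial.C ((((p.1 : ℕ) * D + (p.2 : ℕ) + 1 + (q.1 : ℕ) : ℕ) : ℚ))⁻¹ *
      Polynomial.aeval (MvPolynomial.X q.2)
        (Polynomial.bernoulli ((p.1 : ℕ) * D + (p.2 : ℕ) + 1 + (q.1 : ℕ))))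

/-- The Vandermonde product `∏_{1 ≤ i < j ≤ D} (x_j − x_i)`. -/
noncomputable def vand (D : ℕ) : MvPolynomial (Fin D) ℚ :=
  ∏ p ∈ Finset.univ.filter (fun p : Fin D × Fin D => p.1 < p.2),
    (MvPolynomial.X p.2 - MvPolynomial.X p.1)

/-- The rD×rD matrix with rows `n = 1,…,rD` (encoded as pairs `(i,j)`, `n = i·D+j+1`,
in lexicographic order), columns indexed by pairs `(m,v)`, `0 ≤ m ≤ r−1`, `1 ≤ v ≤ D`
(`v` encoded as `q.2 + 1`), and `(n,(m,v))` entry `D^{n+m−1}·B_{n+m}(v/D)/(n+m)`. -/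
noncomputable def deltaMat (r D : ℕ) : Matrix (Fin r × Fin D) (Fin r × Fin D) ℚ :=
  Matrix.of fun p q =>
    (D : ℚ) ^ ((p.1 : ℕ) * D + (p.2 : ℕ) + (q.1 : ℕ)) *
      (Polynomial.bernoulli ((p.1 : ℕ) * D + (p.2 : ℕ) + 1 + (q.1 : ℕ))).eval
        (((q.2 : ℕ) + 1 : ℚ) / D) /
      (((p.1 : ℕ) * D + (p.2 : ℕ) + 1 + (q.1 : ℕ) : ℕ) : ℚ)

/-- `Δ_{r,D}`. -/
noncomputable def delta (r D : ℕ) : ℚ := (deltaMat r D).det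


open MvPolynomial in
theorem degree_add' {σ : Type*} (u v : σ →₀ ℕ) : (u + v).degree = u.degree + v.degree := by
  classical
  simp [Finsupp.degree_eq_weight_one, map_add]

open MvPolynomial in
theorem exists_deg_eq {σ R : Type*} [CommRing R] {p : MvPolynomial σ R} (hp : p ≠ 0) :
    ∃ d ∈ p.support, d.degree = p.totalDegree := by
  obtain ⟨d, hd, hdeg⟩ := Finset.exists_mem_eq_sup p.support
    (MvPolynomial.support_nonempty.mpr hp) (fun m => m.sum fun _ e => e)
  exact ⟨d, hd, hdeg.symm⟩

open MvPolynomial in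
theorem le_totalDegree' {σ R : Type*} [CommRing R] {p : MvPolynomial σ R} {d : σ →₀ ℕ}
    (h : d ∈ p.support) : d.degree ≤ p.totalDegree := MvPolynomial.le_totalDegree h

open MvPolynomial in
theorem totalDegree_mul_eq' {σ R : Type*} [CommRing R] [IsDomain R] {p q : MvPolynomial σ R}
    (hp : p ≠ 0) (hq : q ≠ 0) :
    (p * q).totalDegree = p.totalDegree + q.totalDegree := by
  classical
  refine le_antisymm (totalDegree_mul p q) ?_
  set a := p.totalDegree with ha
  set b := q.totalDegree with hb
  set P := homogeneousComponent a p with hPdef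
  set Q := homogeneousComponent b q with hQdef
  have hcP : ∀ u, coeff u P = if u.degree = a then coeff u p else 0 := fun u =>
    coeff_homogeneousComponent a p u
  have hcQ : ∀ v, coeff v Q = if v.degree = b then coeff v q else 0 := fun v =>
    coeff_homogeneousComponent b q v
  have hP : P ≠ 0 := by
    obtain ⟨d, hd, hdeg⟩ := exists_deg_eq hp
    intro h
    have := hcP d
    rw [h, if_pos hdeg] at this
    exact (MvPolynomial.mem_support_iff.mp hd) (by simpa using this.symm)
  have hQ : Q ≠ 0 := by
    obtain ⟨d, hd, hdeg⟩ := exists_deg_eq hq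
    intro h
    have := hcQ d
    rw [h, if_pos hdeg] at this
    exact (MvPolynomial.mem_support_iff.mp hd) (by simpa using this.symm)
  obtain ⟨d, hd, -⟩ := exists_deg_eq (mul_ne_zero hP hQ)
  have hdPQ : coeff d (P * Q) ≠ 0 := MvPolynomial.mem_support_iff.mp hd
  have hddeg : d.degree = a + b := by
    rw [MvPolynomial.coeff_mul] at hdPQ
    obtain ⟨⟨u, v⟩, huv, hne⟩ := Finset.exists_ne_zero_of_sum_ne_zero hdPQ
    have huvd : u + v = d := Finset.HasAntidiagonal.mem_antidiagonal.mp huv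
    have hu : u.degree = a := by
      by_contra h
      rw [hcP u, if_neg h, zero_mul] at hne
      exact hne rfl
    have hv : v.degree = b := by
      by_contra h
      rw [hcQ v, if_neg h, mul_zero] at hne
      exact hne rfl
    rw [← huvd, degree_add', hu, hv]
  have hco : coeff d (p * q) = coeff d (P * Q) := by
    rw [MvPolynomial.coeff_mul, MvPolynomial.coeff_mul]
    refine Finset.sum_congr rfl ?_
    rintro ⟨u, v⟩ huv
    have huvd : u + v = d := Finset.HasAntidiagonal.mem_antidiagonal.mp huv
    rw [hcP u, hcQ v]
    by_cases hu : coeff u p = 0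
    · by_cases h1 : u.degree = a <;> by_cases h2 : v.degree = b <;> simp [hu]
    by_cases hv : coeff v q = 0
    · by_cases h1 : u.degree = a <;> by_cases h2 : v.degree = b <;> simp [hv]
    have hu' : u.degree ≤ a := le_totalDegree' (MvPolynomial.mem_support_iff.mpr hu)
    have hv' : v.degree ≤ b := le_totalDegree' (MvPolynomial.mem_support_iff.mpr hv)
    have hsum : u.degree + v.degree = a + b := by rw [← degree_add', huvd, hddeg]
    have h1 : u.degree = a := by omega
    have h2 : v.degree = b := by omega
    rw [if_pos h1, if_pos h2]
  have : d ∈ (p * q).support := MvPolynomial.mem_support_iff.mpr (by rw [hco]; exact hdPQ)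
  calc a + b = d.degree := hddeg.symm
    _ ≤ (p * q).totalDegree := le_totalDegree' this

open MvPolynomial in
theorem totalDegree_pow_eq' {σ R : Type*} [CommRing R] [IsDomain R] {p : MvPolynomial σ R}
    (hp : p ≠ 0) (n : ℕ) : (p ^ n).totalDegree = n * p.totalDegree := by
  induction n with
  | zero => simp
  | succ n ih =>
    rw [pow_succ, totalDegree_mul_eq' (pow_ne_zero n hp) hp, ih]
    ring

open MvPolynomial in
theorem totalDegree_prod_eq' {σ R ι : Type*} [CommRing R] [IsDomain R] (s : Finset ι)
    (f : ι → MvPolynomial σ R) (h : ∀ x ∈ s, f x ≠ 0) :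
    (∏ x ∈ s, f x).totalDegree = ∑ x ∈ s, (f x).totalDegree := by
  classical
  induction s using Finset.induction_on with
  | empty => simp
  | @insert c t hc ih =>
    rw [Finset.prod_insert hc, Finset.sum_insert hc,
      totalDegree_mul_eq' (h c (Finset.mem_insert_self c t))
        (Finset.prod_ne_zero_iff.mpr fun x hx => h x (Finset.mem_insert_of_mem hx)),
      ih (fun x hx => h x (Finset.mem_insert_of_mem hx))]

open MvPolynomial in
theorem primeXsub {D : ℕ} {i j : Fin D} (h : i ≠ j) :
    Prime (X j - X i : MvPolynomial (Fin D) ℚ) := by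
  let e : MvPolynomial (Fin D) ℚ ≃ₐ[ℚ] Polynomial (MvPolynomial {b : Fin D // b ≠ j} ℚ) :=
    (renameEquiv ℚ (Equiv.optionSubtypeNe j).symm).trans (optionEquivLeft ℚ _)
  have hj : e (X j) = Polynomial.X := by
    simp only [e, AlgEquiv.trans_apply, renameEquiv_apply, rename_X,
      Equiv.optionSubtypeNe_symm_self, optionEquivLeft_X_none]
  have hi : e (X i) = Polynomial.C (X ⟨i, h⟩) := by
    simp only [e, AlgEquiv.trans_apply, renameEquiv_apply, rename_X,
      Equiv.optionSubtypeNe_symm_of_ne h, optionEquivLeft_X_some]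
  have he : e.toMulEquiv (X j - X i) = Polynomial.X - Polynomial.C (X ⟨i, h⟩) := by
    show e (X j - X i) = _
    rw [map_sub, hj, hi]
  rw [← MulEquiv.prime_iff e.toMulEquiv, he]
  exact Polynomial.prime_X_sub_C _

open MvPolynomial in
theorem notdvdpairs {D : ℕ} {i j i' j' : Fin D} (hij : i < j) (hij' : i' < j')
    (hne : (i, j) ≠ (i', j')) :
    ¬ ((X j - X i : MvPolynomial (Fin D) ℚ) ∣ (X j' - X i')) := by
  rintro ⟨w, hw⟩
  set x : Fin D → ℚ := fun k => if k = j then ((i : ℕ) : ℚ) else ((k : ℕ) : ℚ) with hx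
  have h0 : eval x (X j - X i : MvPolynomial (Fin D) ℚ) = 0 := by
    simp [hx]
  have h1 : eval x (X j' - X i' : MvPolynomial (Fin D) ℚ) = 0 := by
    rw [hw, map_mul, h0, zero_mul]
  simp only [map_sub, eval_X, hx] at h1
  have hcast : ∀ a b : Fin D, ((a : ℕ) : ℚ) = ((b : ℕ) : ℚ) → a = b := by
    intro a b hab
    exact Fin.ext (Nat.cast_injective hab)
  have h1' : (if j' = j then ((i : ℕ) : ℚ) else ((j' : ℕ) : ℚ))
      = (if i' = j then ((i : ℕ) : ℚ) else ((i' : ℕ) : ℚ)) := sub_eq_zero.mp h1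
  by_cases hjj : j' = j
  · have hi'j : i' ≠ j := Fin.ne_of_lt (hjj ▸ hij')
    rw [if_pos hjj, if_neg hi'j] at h1'
    have : i = i' := hcast _ _ h1'
    exact hne (by rw [this, hjj])
  · rw [if_neg hjj] at h1'
    by_cases hi'j : i' = j
    · rw [if_pos hi'j] at h1'
      have h2 : j' = i := hcast _ _ h1'
      have h3 : i < j' := hij.trans (by rw [← hi'j]; exact hij')
      rw [h2] at h3
      exact lt_irrefl _ h3
    · rw [if_neg hi'j] at h1'
      exact absurd (hcast _ _ h1') (Fin.ne_of_gt hij')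

open MvPolynomial in
theorem pow_dvd_F (r D : ℕ) {i j : Fin D} (hij : i ≠ j) :
    (X i - X j : MvPolynomial (Fin D) ℚ) ^ r ∣ Fpoly r D := by
  classical
  set M : Matrix (Fin r × Fin D) (Fin r × Fin D) (MvPolynomial (Fin D) ℚ) :=
    Matrix.of fun (p q : Fin r × Fin D) =>
      MvPolynomial.C ((((p.1 : ℕ) * D + (p.2 : ℕ) + 1 + (q.1 : ℕ) : ℕ) : ℚ))⁻¹ *
        Polynomial.aeval (MvPolynomial.X q.2)
          (Polynomial.bernoulli ((p.1 : ℕ) * D + (p.2 : ℕ) + 1 + (q.1 : ℕ))) with hM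
  have dv : ∀ (m : Fin r) (p : Fin r × Fin D),
      (X i - X j : MvPolynomial (Fin D) ℚ) ∣ (M p (m, i) - M p (m, j)) := by
    intro m p
    have : M p (m, i) - M p (m, j) =
        MvPolynomial.C ((((p.1 : ℕ) * D + (p.2 : ℕ) + 1 + (m : ℕ) : ℕ) : ℚ))⁻¹ *
          (Polynomial.aeval (X i) (Polynomial.bernoulli ((p.1 : ℕ) * D + (p.2 : ℕ) + 1 + (m : ℕ)))
           - Polynomial.aeval (X j)
              (Polynomial.bernoulli ((p.1 : ℕ) * D + (p.2 : ℕ) + 1 + (m : ℕ)))) := by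
      rw [hM]; simp only [Matrix.of_apply]; ring
    rw [this]
    apply Dvd.dvd.mul_left
    set P := (Polynomial.bernoulli ((p.1 : ℕ) * D + (p.2 : ℕ) + 1 + (m : ℕ))).map
      (algebraMap ℚ (MvPolynomial (Fin D) ℚ)) with hP
    have ha : ∀ y : MvPolynomial (Fin D) ℚ,
        Polynomial.aeval y (Polynomial.bernoulli ((p.1 : ℕ) * D + (p.2 : ℕ) + 1 + (m : ℕ)))
          = P.eval y := by
      intro y
      rw [hP, Polynomial.eval_map, Polynomial.aeval_def]
    rw [ha, ha]
    exact Polynomial.sub_dvd_eval_sub _ _ _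
  choose B hB using fun m p => (dv m p)
  set N : ℕ → Matrix (Fin r × Fin D) (Fin r × Fin D) (MvPolynomial (Fin D) ℚ) := fun k =>
    Matrix.of fun p q => if q.2 = i ∧ (q.1 : ℕ) < k then B q.1 p else M p q with hN
  have key : ∀ k : ℕ, k ≤ r → M.det = (X i - X j) ^ k * (N k).det := by
    intro k
    induction k with
    | zero =>
      intro _
      have : N 0 = M := by
        apply Matrix.ext; intro p q
        simp [hN]
      rw [this, pow_zero, one_mul]
    | succ k ih =>
      intro hk1
      have hk : k ≤ r := Nat.le_of_succ_le hk1
      have hkr : k < r := hk1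
      set mk : Fin r := ⟨k, hkr⟩ with hmk
      have step1 : N k = (N k).updateCol (mk, i)
          ((fun p => M p (mk, j)) + ((X i - X j : MvPolynomial (Fin D) ℚ) • B mk)) := by
        apply Matrix.ext; intro p q
        rw [Matrix.updateCol_apply]
        by_cases hq : q = (mk, i)
        · rw [if_pos hq, hq]
          simp only [Pi.add_apply, Pi.smul_apply, smul_eq_mul]
          have h1 : N k p (mk, i) = M p (mk, i) := by
            simp only [hN, Matrix.of_apply]
            rw [if_neg]
            rintro ⟨-, h2⟩
            exact absurd h2 (lt_irrefl k)
          rw [h1, ← hB mk p]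
          ring
        · rw [if_neg hq]
      have step2 : ((N k).updateCol (mk, i) (fun p => M p (mk, j))).det = 0 := by
        apply Matrix.det_zero_of_column_eq (i := (mk, i)) (j := (mk, j))
        · intro h; exact hij (congrArg Prod.snd h)
        · intro p
          rw [Matrix.updateCol_self, Matrix.updateCol_ne
            (fun h => hij (congrArg Prod.snd h).symm)]
          simp only [hN, Matrix.of_apply]
          rw [if_neg]
          rintro ⟨h1, -⟩
          exact hij h1.symm
      have step3 : (N k).updateCol (mk, i) (B mk) = N (k + 1) := by
        apply Matrix.ext; intro p q
        rw [Matrix.updateCol_apply]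
        by_cases hq : q = (mk, i)
        · rw [if_pos hq, hq]
          show B mk p = if ((mk, i).2 = i ∧ (((mk, i).1 : Fin r) : ℕ) < k + 1)
            then B (mk, i).1 p else M p (mk, i)
          rw [if_pos ⟨rfl, Nat.lt_succ_self k⟩]
        · rw [if_neg hq]
          show (if (q.2 = i ∧ ((q.1 : Fin r) : ℕ) < k) then B q.1 p else M p q)
            = if (q.2 = i ∧ ((q.1 : Fin r) : ℕ) < k + 1) then B q.1 p else M p q
          have hiff : (q.2 = i ∧ ((q.1 : Fin r) : ℕ) < k)
              ↔ (q.2 = i ∧ ((q.1 : Fin r) : ℕ) < k + 1) := by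
            constructor
            · rintro ⟨h1, h2⟩; exact ⟨h1, Nat.lt_succ_of_lt h2⟩
            · rintro ⟨h1, h2⟩
              refine ⟨h1, ?_⟩
              rcases Nat.lt_succ_iff_lt_or_eq.mp h2 with h3 | h3
              · exact h3
              · exact absurd (Prod.ext (Fin.ext h3) h1) hq
          rw [if_congr hiff rfl rfl]
      have hdet : (N k).det = (X i - X j) * (N (k + 1)).det := by
        conv_lhs => rw [step1]
        rw [Matrix.det_updateCol_add (N k) (mk, i) (fun p => M p (mk, j))
            ((X i - X j : MvPolynomial (Fin D) ℚ) • B mk), step2, zero_add,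
          Matrix.det_updateCol_smul, step3]
      rw [ih hk, hdet, pow_succ]
      ring
  have := key r le_rfl
  rw [Fpoly, ← hM, this]
  exact Dvd.intro _ rfl

theorem prod_pow_dvd_aux {A : Type*} [CommRing A] [IsDomain A] {ι : Type*} [DecidableEq ι]
    (s : Finset ι) (f : ι → A) (a : A) (r : ℕ)
    (hp : ∀ x ∈ s, Prime (f x)) (hd : ∀ x ∈ s, f x ^ r ∣ a)
    (hnd : ∀ x ∈ s, ∀ y ∈ s, x ≠ y → ¬ f x ∣ f y) :
    (∏ x ∈ s, f x ^ r) ∣ a := by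
  induction s using Finset.induction_on with
  | empty => simpa using dvd_refl a |>.mono_left (one_dvd a)
  | @insert c t hc ih =>
    have h1 : (∏ x ∈ t, f x ^ r) ∣ a :=
      ih (fun x hx => hp x (Finset.mem_insert_of_mem hx))
        (fun x hx => hd x (Finset.mem_insert_of_mem hx))
        (fun x hx y hy => hnd x (Finset.mem_insert_of_mem hx) y (Finset.mem_insert_of_mem hy))
    obtain ⟨b, hb⟩ := h1
    have hcp : Prime (f c) := hp c (Finset.mem_insert_self c t)
    have hnotdvd : ¬ f c ∣ ∏ x ∈ t, f x ^ r := by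
      intro h
      obtain ⟨y, hy, hdy⟩ := (Prime.dvd_finset_prod_iff hcp _).mp h
      exact hnd c (Finset.mem_insert_self c t) y (Finset.mem_insert_of_mem hy)
        (fun hcy => hc (hcy ▸ hy)) (hcp.dvd_of_dvd_pow hdy)
    have h3 : f c ^ r ∣ b :=
      hcp.pow_dvd_of_dvd_mul_left r hnotdvd
        (by rw [← hb]; exact hd c (Finset.mem_insert_self c t))
    obtain ⟨u, hu⟩ := h3
    rw [Finset.prod_insert hc, hb, hu]
    exact ⟨u, by ring⟩

open MvPolynomial in
theorem vand_pow_dvd (r D : ℕ) : vand D ^ r ∣ Fpoly r D := by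
  classical
  rw [vand, ← Finset.prod_pow]
  apply prod_pow_dvd_aux
  · intro p hp
    exact primeXsub (Fin.ne_of_lt (Finset.mem_filter.mp hp).2)
  · intro p hp
    have h1 := pow_dvd_F r D (i := p.2) (j := p.1)
      (Fin.ne_of_lt (Finset.mem_filter.mp hp).2).symm
    exact h1
  · intro p hp q hq hne
    exact notdvdpairs (Finset.mem_filter.mp hp).2 (Finset.mem_filter.mp hq).2
      (by simpa using hne)

open MvPolynomial in
theorem vand_eq_det (D : ℕ) :
    vand D = (Matrix.vandermonde (fun k : Fin D => (X k : MvPolynomial (Fin D) ℚ))).det := by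
  classical
  rw [Matrix.det_vandermonde, vand, Finset.prod_filter, Fintype.prod_prod_type]
  apply Finset.prod_congr rfl
  intro i _
  rw [← Finset.prod_filter]
  apply Finset.prod_congr _ (fun _ _ => rfl)
  ext b
  simp [Finset.mem_Ioi]

open MvPolynomial in
theorem rename_vand (D : ℕ) (σ : Equiv.Perm (Fin D)) :
    rename σ (vand D)
      = ((Equiv.Perm.sign σ : ℤ) : MvPolynomial (Fin D) ℚ) * vand D := by
  classical
  rw [vand_eq_det]
  have h1 : (rename σ) (Matrix.vandermonde fun k : Fin D => (X k : MvPolynomial (Fin D) ℚ)).det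
      = (((Matrix.vandermonde fun k : Fin D => (X k : MvPolynomial (Fin D) ℚ))).map
          (rename σ)).det := by
    exact RingHom.map_det _ _
  rw [h1]
  have h2 : ((Matrix.vandermonde fun k : Fin D => (X k : MvPolynomial (Fin D) ℚ))).map
      (rename σ)
      = (Matrix.vandermonde fun k : Fin D => (X k : MvPolynomial (Fin D) ℚ)).submatrix σ id := by
    apply Matrix.ext; intro p q
    simp [Matrix.vandermonde, map_pow]
  rw [h2, Matrix.det_permute, ← vand_eq_det]

open MvPolynomial in
theorem rename_F (r D : ℕ) (σ : Equiv.Perm (Fin D)) :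
    rename σ (Fpoly r D)
      = ((Equiv.Perm.sign σ : ℤ) : MvPolynomial (Fin D) ℚ) ^ r * Fpoly r D := by
  classical
  set M : Matrix (Fin r × Fin D) (Fin r × Fin D) (MvPolynomial (Fin D) ℚ) :=
    Matrix.of fun (p q : Fin r × Fin D) =>
      MvPolynomial.C ((((p.1 : ℕ) * D + (p.2 : ℕ) + 1 + (q.1 : ℕ) : ℕ) : ℚ))⁻¹ *
        Polynomial.aeval (MvPolynomial.X q.2)
          (Polynomial.bernoulli ((p.1 : ℕ) * D + (p.2 : ℕ) + 1 + (q.1 : ℕ))) with hM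
  have h1 : rename σ (Fpoly r D) = (M.map (rename σ)).det := by
    rw [Fpoly, ← hM]
    exact RingHom.map_det _ _
  set τ : Equiv.Perm (Fin r × Fin D) := Equiv.prodCongr (Equiv.refl (Fin r)) σ with hτ
  have h2 : M.map (rename σ) = M.submatrix id τ := by
    apply Matrix.ext; intro p q
    simp only [Matrix.map_apply, Matrix.submatrix_apply, hM, Matrix.of_apply, map_mul,
      rename_C, id_eq, hτ, Equiv.prodCongr_apply, Prod.map]
    congr 1
    rw [← Polynomial.aeval_algHom_apply, rename_X]
    rfl
  have h3 : Equiv.Perm.sign τ = Equiv.Perm.sign σ ^ r := by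
    have : τ = Equiv.prodCongrRight (fun _ : Fin r => σ) := by
      apply Equiv.ext; intro x; rfl
    rw [this, Equiv.Perm.sign_prodCongrRight]
    simp
  rw [h1, h2, Matrix.det_permute' τ M, h3, Fpoly, ← hM]
  push_cast
  ring

theorem bern_natDeg (n : ℕ) : (Polynomial.bernoulli n).natDegree ≤ n := by
  rw [Polynomial.bernoulli_def]
  apply Polynomial.natDegree_sum_le_of_forall_le
  intro i hi
  exact (Polynomial.natDegree_monomial_le _).trans
    (Nat.lt_succ_iff.mp (Finset.mem_range.mp hi))

open MvPolynomial in
theorem taeval {D : ℕ} (v : Fin D) (P : Polynomial ℚ) :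
    (Polynomial.aeval (X v : MvPolynomial (Fin D) ℚ) P).totalDegree ≤ P.natDegree := by
  rw [Polynomial.aeval_eq_sum_range]
  apply (totalDegree_finset_sum _ _).trans
  apply Finset.sup_le
  intro i hi
  apply (totalDegree_smul_le _ _).trans
  rw [totalDegree_X_pow]
  exact Nat.lt_succ_iff.mp (Finset.mem_range.mp hi)

open MvPolynomial in
theorem tdeg_units_zsmul {σ' : Type*} (u : ℤˣ) (p : MvPolynomial σ' ℚ) :
    (u • p).totalDegree = p.totalDegree := by
  rcases Int.units_eq_one_or u with h | h
  · rw [h, one_smul]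
  · rw [h, Units.smul_def]
    norm_num

theorem sum_fst (r D : ℕ) :
    ∑ q : Fin r × Fin D, (q.1 : ℕ) = (∑ i ∈ Finset.range r, i) * D := by
  rw [Fintype.sum_prod_type]
  simp only [Finset.sum_const, Finset.card_univ, Fintype.card_fin, smul_eq_mul]
  have h : ∑ x : Fin r, D * (x : ℕ) = ∑ x : Fin r, (x : ℕ) * D :=
    Finset.sum_congr rfl (fun x _ => by ring)
  rw [h, ← Finset.sum_mul, Fin.sum_univ_eq_sum_range (fun i => i) r]

theorem sum_rows (r D : ℕ) :
    ∑ p : Fin r × Fin D, ((p.1 : ℕ) * D + (p.2 : ℕ) + 1)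
      = (∑ i ∈ Finset.range r, i) * (D * D) + r * (∑ j ∈ Finset.range D, j) + r * D := by
  rw [Fintype.sum_prod_type]
  simp only [Finset.sum_add_distrib, Finset.sum_const, Finset.card_univ, Fintype.card_fin,
    smul_eq_mul]
  have h : ∑ x : Fin r, D * ((x : ℕ) * D) = ∑ x : Fin r, (x : ℕ) * (D * D) :=
    Finset.sum_congr rfl (fun x _ => by ring)
  rw [h, ← Finset.sum_mul, Fin.sum_univ_eq_sum_range (fun i => i) r,
    Fin.sum_univ_eq_sum_range (fun j => j) D]
  ring

open MvPolynomial in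
theorem degF_le (r D : ℕ) (hr : 1 ≤ r) (hD : 1 ≤ D) :
    (Fpoly r D).totalDegree ≤ r ^ 2 * (D * (D + 1) / 2) := by
  classical
  obtain ⟨k, hk⟩ : ∃ k, D * (D + 1) = k + k := (Nat.even_mul_succ_self D)
  have hdiv : D * (D + 1) / 2 = k := by omega
  rw [hdiv]
  rw [Fpoly, Matrix.det_apply]
  apply (totalDegree_finset_sum _ _).trans
  apply Finset.sup_le
  intro σ _
  rw [tdeg_units_zsmul]
  apply le_trans (totalDegree_finset_prod _ _)
  have hterm : ∀ q : Fin r × Fin D,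
      ((Matrix.of fun (p q : Fin r × Fin D) =>
        MvPolynomial.C ((((p.1 : ℕ) * D + (p.2 : ℕ) + 1 + (q.1 : ℕ) : ℕ) : ℚ))⁻¹ *
          Polynomial.aeval (MvPolynomial.X q.2)
            (Polynomial.bernoulli ((p.1 : ℕ) * D + (p.2 : ℕ) + 1 + (q.1 : ℕ)))) (σ q) q
        ).totalDegree
        ≤ ((σ q).1 : ℕ) * D + ((σ q).2 : ℕ) + 1 + (q.1 : ℕ) := by
    intro q
    simp only [Matrix.of_apply]
    apply (totalDegree_mul _ _).trans
    rw [totalDegree_C, zero_add]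
    exact (taeval _ _).trans (bern_natDeg _)
  apply le_trans (Finset.sum_le_sum (fun q _ => hterm q))
  have hsplit : ∑ q : Fin r × Fin D,
      (((σ q).1 : ℕ) * D + ((σ q).2 : ℕ) + 1 + (q.1 : ℕ))
      = (∑ q : Fin r × Fin D, (((σ q).1 : ℕ) * D + ((σ q).2 : ℕ) + 1))
        + ∑ q : Fin r × Fin D, (q.1 : ℕ) := by
    rw [← Finset.sum_add_distrib]
  rw [hsplit, Equiv.sum_comp σ (fun p : Fin r × Fin D => (p.1 : ℕ) * D + (p.2 : ℕ) + 1),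
    sum_rows, sum_fst]
  obtain ⟨r', rfl⟩ : ∃ r', r = r' + 1 := ⟨r - 1, by omega⟩
  obtain ⟨D', rfl⟩ : ∃ D', D = D' + 1 := ⟨D - 1, by omega⟩
  set a := ∑ i ∈ Finset.range (r' + 1), i with ha'
  set b := ∑ j ∈ Finset.range (D' + 1), j with hb'
  have ha : a * 2 = (r' + 1) * r' := by
    rw [ha', Finset.sum_range_id_mul_two]; simp
  have hb : b * 2 = (D' + 1) * D' := by
    rw [hb', Finset.sum_range_id_mul_two]; simp
  apply le_of_eq
  have key : (a * ((D' + 1) * (D' + 1)) + (r' + 1) * b + (r' + 1) * (D' + 1) + a * (D' + 1)) * 2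
      = ((r' + 1) ^ 2 * k) * 2 := by
    have h2k : k * 2 = (D' + 1) * (D' + 2) := by
      rw [mul_two, ← hk]
    calc (a * ((D' + 1) * (D' + 1)) + (r' + 1) * b + (r' + 1) * (D' + 1) + a * (D' + 1)) * 2
        = (a * 2) * ((D' + 1) * (D' + 1)) + (r' + 1) * (b * 2) + ((r' + 1) * (D' + 1)) * 2
          + (a * 2) * (D' + 1) := by ring
      _ = ((r' + 1) * r') * ((D' + 1) * (D' + 1)) + (r' + 1) * ((D' + 1) * D')
          + ((r' + 1) * (D' + 1)) * 2 + ((r' + 1) * r') * (D' + 1) := by rw [ha, hb]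
      _ = ((r' + 1) ^ 2) * ((D' + 1) * (D' + 2)) := by ring
      _ = ((r' + 1) ^ 2 * k) * 2 := by rw [← h2k]; ring
  exact Nat.eq_of_mul_eq_mul_right two_pos key

open MvPolynomial in
theorem deg_X_sub {D : ℕ} {i j : Fin D} (hij : i ≠ j) :
    (X j - X i : MvPolynomial (Fin D) ℚ).totalDegree = 1 := by
  classical
  apply le_antisymm
  · apply (totalDegree_sub _ _).trans
    rw [totalDegree_X, totalDegree_X]
    exact le_refl _
  · have hc : coeff (Finsupp.single j 1) (X j - X i : MvPolynomial (Fin D) ℚ) = 1 := by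
      rw [coeff_sub, coeff_X, coeff_X, if_pos rfl, if_neg, sub_zero]
      intro h
      have := DFunLike.congr_fun h j
      simp [Finsupp.single_apply, hij] at this
    have hmem : Finsupp.single j 1 ∈ (X j - X i : MvPolynomial (Fin D) ℚ).support :=
      MvPolynomial.mem_support_iff.mpr (by rw [hc]; exact one_ne_zero)
    have hle := le_totalDegree' hmem
    have hdeg1 : (Finsupp.single j (1 : ℕ)).degree = 1 := by
      exact Finsupp.degree_single j 1
    rwa [hdeg1] at hle

theorem card_pairs (D : ℕ) :
    (Finset.univ.filter (fun p : Fin D × Fin D => p.1 < p.2)).card = D * (D - 1) / 2 := by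
  classical
  rw [Finset.card_filter, Fintype.sum_prod_type]
  have hinner : ∀ i : Fin D, (∑ j : Fin D, if i < j then 1 else 0) = D - 1 - (i : ℕ) := by
    intro i
    rw [← Finset.card_filter]
    have : Finset.univ.filter (fun j : Fin D => i < j) = Finset.Ioi i := by
      ext b
      simp [Finset.mem_Ioi]
    rw [this, Fin.card_Ioi]
  rw [Finset.sum_congr rfl (fun i _ => hinner i),
    Fin.sum_univ_eq_sum_range (fun n => D - 1 - n) D]
  have hrefl := Finset.sum_range_reflect (fun n => n) D
  rw [hrefl, Finset.sum_range_id]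

open MvPolynomial in
theorem vand_ne_zero (D : ℕ) : vand D ≠ 0 := by
  rw [vand]
  apply Finset.prod_ne_zero_iff.mpr
  intro p hp
  exact (primeXsub (Fin.ne_of_lt (Finset.mem_filter.mp hp).2)).ne_zero

open MvPolynomial in
theorem vand_deg (D : ℕ) : (vand D).totalDegree = D * (D - 1) / 2 := by
  rw [vand, totalDegree_prod_eq' _ _
    (fun p hp => (primeXsub (Fin.ne_of_lt (Finset.mem_filter.mp hp).2)).ne_zero),
    Finset.sum_congr rfl (fun p hp => deg_X_sub (Fin.ne_of_lt (Finset.mem_filter.mp hp).2)),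
    Finset.sum_const, smul_eq_mul, mul_one, card_pairs]

/-- For all r, D ≥ 1, `∏_{i<j}(x_j−x_i)^r` divides `F_{r,D}`, and the
quotient `G_{r,D}` is a symmetric polynomial of total degree at most
`r²·D(D+1)/2 − r·D(D−1)/2`. -/
theorem vandermonde_pow_dvd_F (r D : ℕ) (hr : 1 ≤ r) (hD : 1 ≤ D) :
    ∃ G : MvPolynomial (Fin D) ℚ,
      Fpoly r D = vand D ^ r * G ∧ G.IsSymmetric ∧
        G.totalDegree ≤ r ^ 2 * (D * (D + 1) / 2) - r * (D * (D - 1) / 2) := by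
  classical
  obtain ⟨G, hG⟩ := vand_pow_dvd r D
  have hvand : vand D ≠ 0 := vand_ne_zero D
  refine ⟨G, hG, ?_, ?_⟩
  · -- symmetry
    intro σ
    have hε : ((Equiv.Perm.sign σ : ℤ) : MvPolynomial (Fin D) ℚ) ≠ 0 := by
      rcases Int.units_eq_one_or (Equiv.Perm.sign σ) with h | h <;> rw [h] <;> norm_num
    have h1 := rename_F r D σ
    rw [hG, map_mul, map_pow, rename_vand, mul_pow] at h1
    have h2 : (((Equiv.Perm.sign σ : ℤ) : MvPolynomial (Fin D) ℚ) ^ r * vand D ^ r)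
        * MvPolynomial.rename σ G
        = (((Equiv.Perm.sign σ : ℤ) : MvPolynomial (Fin D) ℚ) ^ r * vand D ^ r) * G := by
      rw [mul_assoc] at h1 ⊢
      rw [h1]
      ring
    exact mul_left_cancel₀ (mul_ne_zero (pow_ne_zero _ hε) (pow_ne_zero _ hvand)) h2
  · -- degree bound
    by_cases hG0 : G = 0
    · rw [hG0]
      simp
    have heq : (Fpoly r D).totalDegree
        = r * (D * (D - 1) / 2) + G.totalDegree := by
      rw [hG, totalDegree_mul_eq' (pow_ne_zero r hvand) hG0,
        totalDegree_pow_eq' hvand r, vand_deg]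
    have hF := degF_le r D hr hD
    rw [heq] at hF
    omega
end

section
/- Let D ≥ 1 and let x_1,…,x_D be pairwise distinct rational numbers. Then Σ_{t=0}^{D} (−1)^t E_{D,D−t}(x_1,…,x_D)/(t+1) = Σ_{k=1}^{D} Σ_{ℓ=0}^{D−1} (−1)^{D−1−ℓ} · B_D(x_k) · E_{D−1,D−1−ℓ}(x_1,…,\hat{x_k},…,x_D) / ((ℓ+1)·∏_{j≠k}(x_j−x_k)), where \hat{x_k} means that x_k is omitted. -/
open Nat Finset

/-- The elementary symmetric polynomial of degree k in the values `x i`, `i ∈ S`: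
the sum over all k-element subsets A of S of `∏_{i ∈ A} x i`. -/
def esymmVal {D : ℕ} (S : Finset (Fin D)) (k : ℕ) (x : Fin D → ℚ) : ℚ :=
  ∑ A ∈ S.powersetCard k, ∏ i ∈ A, x i

section Aux

open Polynomial

/-- `II p` is the integral of `p` over `[0,1]`, computed formally from coefficients. -/
noncomputable def II (p : Polynomial ℚ) : ℚ := p.sum fun n a => a / (n + 1)

lemma II_add (p q : Polynomial ℚ) : II (p + q) = II p + II q :=
  Polynomial.sum_add_index p q _ (fun _ => zero_div _) (fun a b c => add_div b c _)

lemma II_zero : II 0 = 0 := Polynomial.sum_zero_index _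

lemma II_smul (c : ℚ) (p : Polynomial ℚ) : II (c • p) = c * II p := by
  rw [II, Polynomial.sum_smul_index p c (fun n a => a / (n + 1)) (fun i => zero_div _)]
  simp only [II, Polynomial.sum_def, mul_div_assoc, ← Finset.mul_sum]

lemma II_C_mul (c : ℚ) (p : Polynomial ℚ) : II (C c * p) = c * II p := by
  rw [← smul_eq_C_mul, II_smul]

lemma II_monomial (n : ℕ) (a : ℚ) : II (monomial n a) = a / (n + 1) :=
  Polynomial.sum_monomial_index _ _ (zero_div _)

lemma II_sum {ι : Type*} (s : Finset ι) (g : ι → Polynomial ℚ) :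
    II (∑ i ∈ s, g i) = ∑ i ∈ s, II (g i) := by
  classical
  induction s using Finset.induction_on with
  | empty => simp [II_zero]
  | insert _ _ h ih => rw [Finset.sum_insert h, II_add, ih, Finset.sum_insert h]

lemma II_derivative (q : Polynomial ℚ) : II (derivative q) = q.eval 1 - q.eval 0 := by
  induction q using Polynomial.induction_on' with
  | add p q hp hq => rw [map_add, II_add, hp, hq, eval_add, eval_add]; ring
  | monomial n a =>
    rw [derivative_monomial, II_monomial]
    cases n with
    | zero => simp
    | succ m =>
      simp only [eval_monomial, Nat.add_sub_cancel, one_pow, mul_one, ne_eq,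
        Nat.succ_ne_zero, not_false_iff, zero_pow, mul_zero, sub_zero]
      rw [Nat.cast_succ]
      field_simp

lemma II_bernoulli (D : ℕ) (hD : 1 ≤ D) : II (Polynomial.bernoulli D) = 0 := by
  have h : II (((D : ℚ[X]) + 1) * Polynomial.bernoulli D)
      = (Polynomial.bernoulli (D + 1)).eval 1 - (Polynomial.bernoulli (D + 1)).eval 0 := by
    rw [← Polynomial.derivative_bernoulli_add_one, II_derivative]
  rw [bernoulli_eval_one, bernoulli_eval_zero,
    bernoulli_eq_bernoulli'_of_ne_one (by omega), sub_self] at h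
  have hc : ((D : ℚ[X]) + 1) = C ((D : ℚ) + 1) := by
    rw [map_add, map_one, Polynomial.C_eq_natCast]
  rw [hc, II_C_mul] at h
  have hne : ((D : ℚ) + 1) ≠ 0 := by positivity
  exact (mul_eq_zero.mp h).resolve_left hne

lemma prod_eq_multiset {D : ℕ} (x : Fin D → ℚ) (S : Finset (Fin D)) :
    (∏ j ∈ S, (X - C (x j))) = (Multiset.map (fun t => X - C t) (S.val.map x)).prod := by
  rw [Multiset.map_map]
  rfl

lemma II_prod {D : ℕ} (x : Fin D → ℚ) (S : Finset (Fin D)) :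
    II (∏ j ∈ S, (X - C (x j)))
      = ∑ t ∈ range (S.card + 1),
          (-1 : ℚ) ^ (S.card - t) * esymmVal S (S.card - t) x / ((t : ℚ) + 1) := by
  set P : ℚ[X] := ∏ j ∈ S, (X - C (x j)) with hPdef
  have hdeg : P.natDegree = S.card := by
    rw [hPdef, Polynomial.natDegree_prod _ _ (fun i _ => X_sub_C_ne_zero _)]
    simp [natDegree_X_sub_C]
  have hco : ∀ t, t ≤ S.card →
      P.coeff t = (-1 : ℚ) ^ (S.card - t) * esymmVal S (S.card - t) x := by
    intro t ht
    have hcard : Multiset.card (S.val.map x) = S.card := by simp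
    have h := Multiset.prod_X_sub_C_coeff (S.val.map x) (k := t) (by rwa [hcard])
    rw [← prod_eq_multiset, hcard] at h
    rw [h, esymmVal, ← Finset.esymm_map_val]
  have hIP : II P = ∑ t ∈ range (S.card + 1), P.coeff t / ((t : ℚ) + 1) := by
    rw [II, Polynomial.sum_over_range' P (f := fun n a => a / (n + 1))
      (fun _ => zero_div _) (S.card + 1) (by omega)]
  rw [hIP]
  refine Finset.sum_congr rfl fun t htm => ?_
  rw [hco t (by simpa using Nat.lt_succ_iff.mp (Finset.mem_range.mp htm))]

lemma bernoulli_coeff_self (n : ℕ) : (Polynomial.bernoulli n).coeff n = 1 := by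
  rw [Polynomial.bernoulli_def, Polynomial.finset_sum_coeff]
  rw [Finset.sum_eq_single n]
  · simp
  · intro b _ hb; simp [Polynomial.coeff_monomial, hb]
  · intro h; exact absurd (Finset.self_mem_range_succ n) h

lemma bernoulli_degree_le (n : ℕ) : (Polynomial.bernoulli n).degree ≤ n := by
  rw [Polynomial.bernoulli_def]
  refine (Polynomial.degree_sum_le _ _).trans ?_
  apply Finset.sup_le
  intro i hi
  refine (Polynomial.degree_monomial_le _ _).trans ?_
  exact_mod_cast Nat.cast_le.mpr (Nat.lt_succ_iff.mp (Finset.mem_range.mp hi))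

lemma bernoulli_degree (n : ℕ) : (Polynomial.bernoulli n).degree = n := by
  refine le_antisymm (bernoulli_degree_le n) ?_
  exact Polynomial.le_degree_of_ne_zero (by rw [bernoulli_coeff_self]; norm_num)

lemma bernoulli_natDegree (n : ℕ) : (Polynomial.bernoulli n).natDegree = n :=
  Polynomial.natDegree_eq_of_degree_eq_some (bernoulli_degree n)

lemma bernoulli_monic (n : ℕ) : (Polynomial.bernoulli n).Monic := by
  rw [Polynomial.Monic, Polynomial.leadingCoeff, bernoulli_natDegree, bernoulli_coeff_self]

end Aux

open Polynomial

/-- For D ≥ 1 and pairwise distinct rationals x_1,…,x_D,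
`Σ_{t=0}^{D} (−1)^t E_{D,D−t}(x_1,…,x_D)/(t+1)
  = Σ_{k=1}^{D} Σ_{ℓ=0}^{D−1} (−1)^{D−1−ℓ}·B_D(x_k)·E_{D−1,D−1−ℓ}(x_1,…,x̂_k,…,x_D)
      /((ℓ+1)·∏_{j≠k}(x_j−x_k))`. -/
theorem esymm_bernoulli_identity (D : ℕ) (hD : 1 ≤ D) (x : Fin D → ℚ)
    (hx : Function.Injective x) :
    ∑ t ∈ Finset.range (D + 1),
        (-1 : ℚ) ^ t * esymmVal Finset.univ (D - t) x / ((t : ℚ) + 1) =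
      ∑ k : Fin D, ∑ ℓ ∈ Finset.range D,
        (-1 : ℚ) ^ (D - 1 - ℓ) * (Polynomial.bernoulli D).eval (x k) *
          esymmVal (Finset.univ.erase k) (D - 1 - ℓ) x /
          (((ℓ : ℚ) + 1) * ∏ j ∈ Finset.univ.erase k, (x j - x k)) := by
  classical
  set P : ℚ[X] := ∏ j : Fin D, (X - C (x j)) with hPdef
  set Pk : Fin D → ℚ[X] := fun k => ∏ j ∈ Finset.univ.erase k, (X - C (x j)) with hPkdef
  have hcardU : (Finset.univ : Finset (Fin D)).card = D := by simp
  have hcardE : ∀ k : Fin D, (Finset.univ.erase k).card = D - 1 := by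
    intro k; rw [Finset.card_erase_of_mem (Finset.mem_univ k), hcardU]
  -- degree facts
  have hPmonic : P.Monic := monic_prod_of_monic _ _ fun j _ => monic_X_sub_C _
  have hPnat : P.natDegree = D := by
    rw [hPdef, Polynomial.natDegree_prod _ _ (fun i _ => X_sub_C_ne_zero _)]
    simp [natDegree_X_sub_C]
  have hPdeg : P.degree = (D : ℕ) := by
    rw [Polynomial.degree_eq_natDegree hPmonic.ne_zero, hPnat]
  have hflt : (Polynomial.bernoulli D - P).degree
      < (((Finset.univ : Finset (Fin D)).card : ℕ) : WithBot ℕ) := by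
    rw [hcardU]
    calc (Polynomial.bernoulli D - P).degree < (Polynomial.bernoulli D).degree :=
          Polynomial.degree_sub_lt (by rw [bernoulli_degree, hPdeg])
            (bernoulli_monic D).ne_zero
            (by rw [(bernoulli_monic D).leadingCoeff, hPmonic.leadingCoeff])
      _ = (D : ℕ) := bernoulli_degree D
  have hinj : Set.InjOn x (Finset.univ : Finset (Fin D)) := fun a _ b _ h => hx h
  have hLag := Lagrange.eq_interpolate (s := Finset.univ) (v := x) hinj hflt
  have hPeval : ∀ k : Fin D, P.eval (x k) = 0 := by
    intro k
    rw [hPdef, Polynomial.eval_prod]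
    exact Finset.prod_eq_zero (Finset.mem_univ k) (by simp)
  simp only [Polynomial.eval_sub, hPeval, sub_zero] at hLag
  -- the Lagrange basis polynomials
  have hbasis : ∀ k : Fin D, Lagrange.basis Finset.univ x k
      = C (∏ j ∈ Finset.univ.erase k, (x k - x j))⁻¹ * Pk k := by
    intro k
    simp only [Lagrange.basis, Lagrange.basisDivisor]
    rw [Finset.prod_mul_distrib, ← map_prod, ← Finset.prod_inv_distrib, hPkdef]
  -- applying the integral to the interpolation identity
  have hsub : II (Polynomial.bernoulli D - P) = II (Polynomial.bernoulli D) - II P := by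
    rw [sub_eq_add_neg, II_add, ← neg_one_smul ℚ P, II_smul]; ring
  have hkey : - II P = ∑ k : Fin D, (Polynomial.bernoulli D).eval (x k) *
      ((∏ j ∈ Finset.univ.erase k, (x k - x j))⁻¹ * II (Pk k)) := by
    have h2 := congrArg II hLag
    rw [hsub, II_bernoulli D hD, zero_sub, Lagrange.interpolate_apply, II_sum] at h2
    rw [h2]
    refine Finset.sum_congr rfl fun k _ => ?_
    rw [hbasis k, ← mul_assoc, ← map_mul, II_C_mul, mul_assoc]
  -- rewrite the LHS
  have hIPk : ∀ k : Fin D, II (Pk k) = ∑ ℓ ∈ Finset.range D,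
      (-1 : ℚ) ^ (D - 1 - ℓ) * esymmVal (Finset.univ.erase k) (D - 1 - ℓ) x
        / ((ℓ : ℚ) + 1) := by
    intro k
    have h := II_prod x (Finset.univ.erase k)
    rw [hcardE k, show D - 1 + 1 = D from by omega] at h
    exact h
  have hL : ∑ t ∈ Finset.range (D + 1),
      (-1 : ℚ) ^ t * esymmVal Finset.univ (D - t) x / ((t : ℚ) + 1)
      = (-1 : ℚ) ^ D * II P := by
    rw [hPdef, II_prod x Finset.univ, hcardU, Finset.mul_sum]
    refine Finset.sum_congr rfl fun t ht => ?_
    have ht' : t ≤ D := Nat.lt_succ_iff.mp (Finset.mem_range.mp ht)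
    have hsign : (-1 : ℚ) ^ D * (-1 : ℚ) ^ (D - t) = (-1 : ℚ) ^ t := by
      rw [← pow_add, show D + (D - t) = 2 * (D - t) + t from by omega, pow_add, pow_mul]
      norm_num
    rw [← hsign, mul_assoc, mul_div_assoc]
  have hdsign : ∀ k : Fin D, ∏ j ∈ Finset.univ.erase k, (x j - x k)
      = (-1 : ℚ) ^ (D - 1) * ∏ j ∈ Finset.univ.erase k, (x k - x j) := by
    intro k
    rw [Finset.prod_congr rfl (fun j _ => show x j - x k = (-1) * (x k - x j) from by ring),
      Finset.prod_mul_distrib, Finset.prod_const, hcardE k]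
  have hR : ∀ k : Fin D, ∑ ℓ ∈ Finset.range D,
      (-1 : ℚ) ^ (D - 1 - ℓ) * (Polynomial.bernoulli D).eval (x k) *
          esymmVal (Finset.univ.erase k) (D - 1 - ℓ) x /
          (((ℓ : ℚ) + 1) * ∏ j ∈ Finset.univ.erase k, (x j - x k))
      = (-1 : ℚ) ^ (D - 1) * ((Polynomial.bernoulli D).eval (x k) *
          ((∏ j ∈ Finset.univ.erase k, (x k - x j))⁻¹ * II (Pk k))) := by
    intro k
    rw [hIPk k]
    simp only [Finset.mul_sum]
    refine Finset.sum_congr rfl fun ℓ _ => ?_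
    rw [hdsign k]
    rw [div_eq_mul_inv, div_eq_mul_inv, mul_inv, mul_inv, ← inv_pow, inv_neg, inv_one]
    ring
  rw [hL, Finset.sum_congr rfl (fun k _ => hR k), ← Finset.mul_sum, ← hkey]
  have hsgn : (-1 : ℚ) ^ D = -(-1 : ℚ) ^ (D - 1) := by
    conv_lhs => rw [show D = (D - 1) + 1 from by omega]
    rw [pow_succ]; ring
  rw [hsgn]
  ring
end
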